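/- Let T be a finite rooted tree with root o and let Ω: T → ℝ satisfy Ω(o)=1 and Ω strictly increasing along paths from the root (Ω(y) < Ω(x) whenever y < x). Define k(x,y) = Ω(x∧y), where x∧y is the meet (deepest common ancestor). Then for any function f: T → ℂ not identically zero, Σ_{x,y∈T} k(x,y) f(x) conj(f(y)) > 0; that is, the matrix (Ω(x∧y))_{x,y∈T} is positive definite. -/

import Mathlib

open Finset

/-- Let `T` be a finite rooted tree (modeled as a finite meet-semilattice with bottom
element `⊥ = o` in which the set of ancestors of every vertex is a chain, so that `x ⊓ y`
is the deepest common ancestor), and let `Ω : T → ℝ` satisfy `Ω(o) = 1` and be strictly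
increasing along paths from the root.  Then for every function `f : T → ℂ` not
identically zero, `Σ_{x,y} Ω(x∧y) f(x) conj(f(y)) > 0`; i.e. the matrix
`(Ω(x∧y))_{x,y}` is positive definite. -/
theorem tree_kernel_posdef {V : Type*} [Fintype V] [SemilatticeInf V] [OrderBot V]
    (hchain : ∀ x : V, IsChain (· ≤ ·) {y : V | y ≤ x})
    (Ω : V → ℝ) (h1 : Ω ⊥ = 1) (hmono : ∀ x y : V, x < y → Ω x < Ω y)
    (f : V → ℂ) (hf : f ≠ 0) :
    (∑ x : V, ∑ y : V, (Ω (x ⊓ y) : ℂ) * f x * (starRingEnd ℂ) (f y)).im = 0 ∧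
      0 < (∑ x : V, ∑ y : V, (Ω (x ⊓ y) : ℂ) * f x * (starRingEnd ℂ) (f y)).re := by
  classical
  -- every non-root vertex has a parent (a greatest strict lower bound)
  have key : ∀ z : V, z ≠ ⊥ → ∃ m : V, m < z ∧ ∀ y, y < z → y ≤ m := by
    intro z hz
    obtain ⟨m, hm, hmax⟩ : ∃ m ∈ Finset.univ.filter (· < z),
        ∀ x ∈ Finset.univ.filter (· < z), ¬ m < x := by
      obtain ⟨m, hm⟩ := Finset.exists_maximal (s := Finset.univ.filter (· < z))
        ⟨⊥, by simp [bot_lt_iff_ne_bot, hz]⟩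
      exact ⟨m, hm.1, fun x hx hlt => lt_irrefl m (lt_of_lt_of_le hlt (hm.2 hx hlt.le))⟩
    simp only [Finset.mem_filter, Finset.mem_univ, true_and] at hm hmax
    refine ⟨m, hm, fun y hy => ?_⟩
    have hcmp := hchain z (le_of_lt hy) (le_of_lt hm)
    by_cases hym : y = m
    · exact le_of_eq hym
    · rcases hcmp hym with h | h
      · exact h
      · exact absurd (lt_of_le_of_ne h (Ne.symm hym)) (hmax y hy)
  choose! pred hpl hpm using key
  set c : V → ℝ := fun z => if z = ⊥ then 1 else Ω z - Ω (pred z) with hc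
  have hcpos : ∀ z : V, 0 < c z := by
    intro z
    by_cases hz : z = ⊥
    · simp [hc, hz]
    · simp only [hc, hz, if_false, sub_pos]
      exact hmono _ _ (hpl z hz)
  -- telescoping: Ω x = sum of increments over ancestors of x
  have tel : ∀ x : V, ∑ z ∈ Finset.univ.filter (· ≤ x), c z = Ω x := by
    intro x
    induction x using WellFoundedLT.induction with
    | ind x ih =>
      have hsplit : Finset.univ.filter (· ≤ x) =
          insert x (Finset.univ.filter (· < x)) := by
        ext z
        simp [le_iff_lt_or_eq, or_comm]
      have hnot : x ∉ Finset.univ.filter (· < x) := by simp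
      rw [hsplit, Finset.sum_insert hnot]
      by_cases hx : x = ⊥
      · subst hx
        have : Finset.univ.filter (· < (⊥ : V)) = ∅ := by
          ext z; simp [not_lt_bot]
        rw [this]
        simp [hc, h1]
      · have hfe : Finset.univ.filter (· < x) = Finset.univ.filter (· ≤ pred x) := by
          ext z
          simp only [Finset.mem_filter, Finset.mem_univ, true_and]
          exact ⟨fun h => hpm x hx z h, fun h => lt_of_le_of_lt h (hpl x hx)⟩
        rw [hfe, ih (pred x) (hpl x hx)]
        simp [hc, hx]
  -- the kernel as a sum of indicator increments
  have hΩ : ∀ x y : V, (Ω (x ⊓ y) : ℂ) =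
      ∑ z : V, if z ≤ x ∧ z ≤ y then (c z : ℂ) else 0 := by
    intro x y
    have := tel (x ⊓ y)
    rw [Finset.sum_filter] at this
    rw [← this]
    push_cast
    refine Finset.sum_congr rfl fun z _ => ?_
    by_cases h : z ≤ x ⊓ y
    · simp [h, le_inf_iff.mp h]
    · simp only [le_inf_iff] at h
      simp [h, le_inf_iff]
  set A : V → ℂ := fun z => ∑ x : V, if z ≤ x then f x else 0 with hA
  have main : (∑ x : V, ∑ y : V, (Ω (x ⊓ y) : ℂ) * f x * (starRingEnd ℂ) (f y)) =
      ∑ z : V, (c z : ℂ) * (A z * (starRingEnd ℂ) (A z)) := by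
    have step : ∀ x y : V, (Ω (x ⊓ y) : ℂ) * f x * (starRingEnd ℂ) (f y) =
        ∑ z : V, (c z : ℂ) *
          ((if z ≤ x then f x else 0) * (starRingEnd ℂ) (if z ≤ y then f y else 0)) := by
      intro x y
      rw [hΩ x y, Finset.sum_mul, Finset.sum_mul]
      refine Finset.sum_congr rfl fun z _ => ?_
      by_cases hzx : z ≤ x <;> by_cases hzy : z ≤ y <;>
        simp [hzx, hzy, mul_comm, mul_left_comm, mul_assoc]
    calc (∑ x : V, ∑ y : V, (Ω (x ⊓ y) : ℂ) * f x * (starRingEnd ℂ) (f y))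
        = ∑ x : V, ∑ y : V, ∑ z : V, (c z : ℂ) *
            ((if z ≤ x then f x else 0) * (starRingEnd ℂ) (if z ≤ y then f y else 0)) := by
          exact Finset.sum_congr rfl fun x _ => Finset.sum_congr rfl fun y _ => step x y
      _ = ∑ x : V, ∑ z : V, ∑ y : V, (c z : ℂ) *
            ((if z ≤ x then f x else 0) * (starRingEnd ℂ) (if z ≤ y then f y else 0)) := by
          exact Finset.sum_congr rfl fun x _ => Finset.sum_comm
      _ = ∑ z : V, ∑ x : V, ∑ y : V, (c z : ℂ) *
            ((if z ≤ x then f x else 0) * (starRingEnd ℂ) (if z ≤ y then f y else 0)) :=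
          Finset.sum_comm
      _ = ∑ z : V, (c z : ℂ) * (A z * (starRingEnd ℂ) (A z)) := by
          refine Finset.sum_congr rfl fun z _ => ?_
          rw [hA]
          simp only [map_sum]
          rw [Finset.sum_mul_sum, Finset.mul_sum]
          exact Finset.sum_congr rfl fun x _ => by rw [Finset.mul_sum]
  have hterm : ∀ z : V, (c z : ℂ) * (A z * (starRingEnd ℂ) (A z)) =
      ((c z * Complex.normSq (A z) : ℝ) : ℂ) := by
    intro z
    rw [Complex.mul_conj]
    push_cast
    ring
  have main2 : (∑ x : V, ∑ y : V, (Ω (x ⊓ y) : ℂ) * f x * (starRingEnd ℂ) (f y)) =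
      ((∑ z : V, c z * Complex.normSq (A z) : ℝ) : ℂ) := by
    rw [main]
    push_cast
    exact Finset.sum_congr rfl fun z _ => by rw [hterm z]; push_cast; ring
  -- positivity: a maximal element of the support of f
  obtain ⟨x₀, hx₀⟩ : ∃ x : V, f x ≠ 0 := by
    by_contra h
    push_neg at h
    exact hf (funext h)
  obtain ⟨m, hm, hmax⟩ : ∃ m ∈ Finset.univ.filter (f · ≠ 0),
      ∀ x ∈ Finset.univ.filter (f · ≠ 0), ¬ m < x := by
    obtain ⟨m, hm⟩ := Finset.exists_maximal (s := Finset.univ.filter (f · ≠ 0))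
      ⟨x₀, by simp [hx₀]⟩
    exact ⟨m, hm.1, fun x hx hlt => lt_irrefl m (lt_of_lt_of_le hlt (hm.2 hx hlt.le))⟩
  simp only [Finset.mem_filter, Finset.mem_univ, true_and] at hm hmax
  have hAm : A m = f m := by
    show (∑ x : V, if m ≤ x then f x else 0) = f m
    have : ∀ x : V, (if m ≤ x then f x else 0) = if x = m then f x else 0 := by
      intro x
      by_cases hxm : x = m
      · simp [hxm]
      · by_cases hmx : m ≤ x
        · have hlt : m < x := lt_of_le_of_ne hmx (Ne.symm hxm)
          have : f x = 0 := by
            by_contra hfx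
            exact hmax x hfx hlt
          simp [hxm, hmx, this]
        · simp [hxm, hmx]
    rw [Finset.sum_congr rfl fun x _ => this x]
    simp
  have hpos : 0 < ∑ z : V, c z * Complex.normSq (A z) := by
    refine Finset.sum_pos' (fun z _ => ?_) ⟨m, Finset.mem_univ m, ?_⟩
    · exact mul_nonneg (le_of_lt (hcpos z)) (Complex.normSq_nonneg _)
    · apply mul_pos (hcpos m)
      rw [hAm]
      exact Complex.normSq_pos.mpr hm
  rw [main2]
  simp [hpos]
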